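/- Let 𝒳, 𝒜, 𝒴, 𝒵, 𝒲, 𝒦 be finite sets. Let X^n = (X₁, …, X_n) be i.i.d. with distribution P_X on 𝒳, let (W, K) = f(X^n) for a deterministic function f : 𝒳^n → 𝒲 × 𝒦, let A^n = f_a(W) for a deterministic function f_a : 𝒲 → 𝒜^n, and suppose that conditionally on (X^n, A^n) = (x^n, a^n) the pairs (Y_i, Z_i), i = 1, …, n, are independent with (Y_i, Z_i) distributed according to a fixed channel P_{YZ|XA}(·,· | x_i, a_i). Then for every i ∈ {1, …, n}, the pair (Y_i, Z_i) is conditionally independent of (W, K, A^{n∖i}, X^{n∖i}, Y_{i+1}^{n}, Z^{i−1}) given (A_i, X_i). In particular, setting U_i = (W, A^{n∖i}, Y_{i+1}^{n}, Z^{i−1}) and V_i = (W, K, A^{n∖i}, Y_{i+1}^{n}, Z^{i−1}), the Markov chain U_i − V_i − (A_i, X_i) − (Y_i, Z_i) holds. -/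

import Mathlib

open MeasureTheory

/-- `prob μ X x = P[X = x]`. -/
noncomputable def prob {Ω : Type*} [MeasurableSpace Ω] (μ : Measure Ω)
    {α : Type*} (X : Ω → α) (x : α) : ℝ :=
  (μ (X ⁻¹' {x})).toReal

/-- Shannon entropy (in bits) of a random variable with values in a finite set. -/
noncomputable def ent {Ω : Type*} [MeasurableSpace Ω] (μ : Measure Ω)
    {α : Type*} [Fintype α] (X : Ω → α) : ℝ :=
  ∑ x : α, -(prob μ X x * Real.logb 2 (prob μ X x))

/-- Conditional entropy `H(X | Y)` in bits. -/
noncomputable def condEnt {Ω : Type*} [MeasurableSpace Ω] (μ : Measure Ω)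
    {α β : Type*} [Fintype α] [Fintype β] (X : Ω → α) (Y : Ω → β) : ℝ :=
  ent μ (fun ω => (X ω, Y ω)) - ent μ Y

/-- Mutual information `I(X; Y)` in bits. -/
noncomputable def mutInf {Ω : Type*} [MeasurableSpace Ω] (μ : Measure Ω)
    {α β : Type*} [Fintype α] [Fintype β] (X : Ω → α) (Y : Ω → β) : ℝ :=
  ent μ X + ent μ Y - ent μ (fun ω => (X ω, Y ω))

/-- Conditional mutual information `I(X; Y | Z)` in bits. -/
noncomputable def condMutInf {Ω : Type*} [MeasurableSpace Ω] (μ : Measure Ω)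
    {α β γ : Type*} [Fintype α] [Fintype β] [Fintype γ]
    (X : Ω → α) (Y : Ω → β) (Z : Ω → γ) : ℝ :=
  condEnt μ X Z - condEnt μ X (fun ω => (Y ω, Z ω))

/-- `X` and `Y` are conditionally independent given `Z`:
`P[X=x, Y=y, Z=z] · P[Z=z] = P[X=x, Z=z] · P[Y=y, Z=z]` for all values. -/
def CondIndepRV {Ω : Type*} [MeasurableSpace Ω] (μ : Measure Ω)
    {α β γ : Type*} (X : Ω → α) (Y : Ω → β) (Z : Ω → γ) : Prop :=
  ∀ (x : α) (y : β) (z : γ),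
    prob μ (fun ω => ((X ω, Y ω), Z ω)) ((x, y), z) * prob μ Z z =
      prob μ (fun ω => (X ω, Z ω)) (x, z) * prob μ (fun ω => (Y ω, Z ω)) (y, z)

/-- The prefix `Z^{i−1}` of a string-valued random variable, encoded with values in
`Fin n → Option α` (positions `≥ i` are `none`). -/
def strPrefix {Ω α : Type*} {n : ℕ} (Z : Ω → Fin n → α) (i : Fin n) :
    Ω → Fin n → Option α :=
  fun ω j => if (j : ℕ) < (i : ℕ) then some (Z ω j) else none

/-- The suffix `Y_{i+1}^{n}` of a string-valued random variable, encoded with values in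
`Fin n → Option α` (positions `≤ i` are `none`). -/
def strSuffix {Ω α : Type*} {n : ℕ} (Y : Ω → Fin n → α) (i : Fin n) :
    Ω → Fin n → Option α :=
  fun ω j => if (i : ℕ) < (j : ℕ) then some (Y ω j) else none

/-- The string `X^{n∖i}` with the `i`-th coordinate removed, encoded with values in
`Fin n → Option α` (position `i` is `none`). -/
def strOmit {Ω α : Type*} {n : ℕ} (X : Ω → Fin n → α) (i : Fin n) :
    Ω → Fin n → Option α :=
  fun ω j => if j = i then none else some (X ω j)


/- auxiliary lemmas -/


lemma aux_sum_prod2 {ι : Type*} [Fintype ι] [DecidableEq ι] {A B : Type*} [Fintype A] [Fintype B]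
    (g : ι → A → B → ℝ) :
    ∑ ys : ι → A, ∑ zs : ι → B, ∏ j, g j (ys j) (zs j) = ∏ j, ∑ a, ∑ b, g j a b := by
  have h1 : ∀ j, ∑ a, ∑ b, g j a b = ∑ p : A × B, g j p.1 p.2 :=
    fun j => (Fintype.sum_prod_type (fun p : A × B => g j p.1 p.2)).symm
  simp_rw [h1]
  rw [Fintype.prod_sum (fun j (p : A × B) => g j p.1 p.2)]
  rw [← Equiv.sum_comp (Equiv.arrowProdEquivProdArrow ι (fun _ => A) (fun _ => B)).symm, Fintype.sum_prod_type]
  rfl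

lemma if_forall_prod {ι : Type*} [Fintype ι] (c : ι → Prop) [DecidablePred c] (f : ι → ℝ) :
    (if ∀ j, c j then ∏ j, f j else 0) = ∏ j, if c j then f j else 0 := by
  by_cases h : ∀ j, c j
  · rw [if_pos h]
    exact Finset.prod_congr rfl fun j _ => (if_pos (h j)).symm
  · rw [if_neg h]
    push_neg at h
    obtain ⟨j, hj⟩ := h
    exact (Finset.prod_eq_zero (Finset.mem_univ j) (by simp [hj])).symm

lemma prob_comp {Ω : Type*} [MeasurableSpace Ω] (μ : Measure Ω) [IsFiniteMeasure μ]
    {S γ : Type*} [Fintype S] [DecidableEq γ]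
    (T : Ω → S) (hTs : ∀ s : S, MeasurableSet (T ⁻¹' {s})) (G : S → γ) (t : γ) :
    prob μ (fun ω => G (T ω)) t = ∑ s : S, if G s = t then prob μ T s else 0 := by
  classical
  have h1 : (fun ω => G (T ω)) ⁻¹' {t}
      = ⋃ s ∈ Finset.univ.filter (fun s => G s = t), T ⁻¹' {s} := by
    ext ω; simp
  rw [prob, h1, measure_biUnion_finset ?_ (fun s _ => hTs s)]
  · rw [ENNReal.toReal_sum (fun s _ => (measure_lt_top μ _).ne)]
    rw [Finset.sum_filter]; rfl
  · intro s _ s' hs' hss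
    simp only [Set.disjoint_left]
    intro ω h1 h2
    exact hss (by simp_all)

lemma main_sum {Ω 𝒳 𝒜 𝒴 𝒵 𝒲 𝒦 : Type*} [MeasurableSpace Ω] (μ : Measure Ω)
    [Fintype 𝒳] [Fintype 𝒴] [Fintype 𝒵] {n : ℕ}
    (Xv : Ω → Fin n → 𝒳) (Yv : Ω → Fin n → 𝒴) (Zv : Ω → Fin n → 𝒵)
    (f : (Fin n → 𝒳) → 𝒲 × 𝒦) (fa : 𝒲 → Fin n → 𝒜)
    (Q : 𝒳 → 𝒜 → 𝒴 × 𝒵 → ℝ)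
    (hchan : ∀ xs ys zs, prob μ (fun ω => (Xv ω, Yv ω, Zv ω)) (xs, ys, zs) =
        prob μ Xv xs * ∏ i, Q (xs i) (fa (f xs).1 i) (ys i, zs i))
    (D : (Fin n → 𝒳) → Prop) [DecidablePred D]
    (F : Fin n → 𝒴 → 𝒵 → Prop) [∀ j a b, Decidable (F j a b)] :
    (∑ xs : Fin n → 𝒳, ∑ ys : Fin n → 𝒴, ∑ zs : Fin n → 𝒵,
      if D xs ∧ ∀ j, F j (ys j) (zs j)
      then prob μ (fun ω => (Xv ω, Yv ω, Zv ω)) (xs, ys, zs) else 0)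
    = ∑ xs : Fin n → 𝒳, if D xs then prob μ Xv xs *
        ∏ j, (∑ y', ∑ z', if F j y' z' then Q (xs j) (fa (f xs).1 j) (y', z') else 0)
      else 0 := by
  classical
  refine Finset.sum_congr rfl fun xs _ => ?_
  by_cases hD : D xs
  · rw [if_pos hD]
    have : ∀ ys zs, (if D xs ∧ ∀ j, F j (ys j) (zs j)
        then prob μ (fun ω => (Xv ω, Yv ω, Zv ω)) (xs, ys, zs) else 0)
        = prob μ Xv xs * ∏ j, (if F j (ys j) (zs j)
            then Q (xs j) (fa (f xs).1 j) (ys j, zs j) else 0) := by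
      intro ys zs
      rw [← if_forall_prod, hchan]
      simp [hD, mul_ite]
    simp_rw [this, ← Finset.mul_sum]
    congr 1
    exact aux_sum_prod2 (fun j a b => if F j a b then Q (xs j) (fa (f xs).1 j) (a, b) else 0)
  · simp [hD]

lemma prob_factored {Ω 𝒳 𝒜 𝒴 𝒵 𝒲 𝒦 γ : Type*} [MeasurableSpace Ω] (μ : Measure Ω)
    [IsFiniteMeasure μ]
    [Fintype 𝒳] [Fintype 𝒴] [Fintype 𝒵] [DecidableEq γ]
    [MeasurableSpace 𝒳] [MeasurableSingletonClass 𝒳]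
    [MeasurableSpace 𝒴] [MeasurableSingletonClass 𝒴]
    [MeasurableSpace 𝒵] [MeasurableSingletonClass 𝒵] {n : ℕ}
    (Xv : Ω → Fin n → 𝒳) (Yv : Ω → Fin n → 𝒴) (Zv : Ω → Fin n → 𝒵)
    (hXm : ∀ i, Measurable fun ω => Xv ω i) (hYm : ∀ i, Measurable fun ω => Yv ω i)
    (hZm : ∀ i, Measurable fun ω => Zv ω i)
    (f : (Fin n → 𝒳) → 𝒲 × 𝒦) (fa : 𝒲 → Fin n → 𝒜)
    (Q : 𝒳 → 𝒜 → 𝒴 × 𝒵 → ℝ)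
    (hchan : ∀ xs ys zs, prob μ (fun ω => (Xv ω, Yv ω, Zv ω)) (xs, ys, zs) =
        prob μ Xv xs * ∏ i, Q (xs i) (fa (f xs).1 i) (ys i, zs i))
    (D : (Fin n → 𝒳) → Prop) [DecidablePred D]
    (F : Fin n → 𝒴 → 𝒵 → Prop) [∀ j a b, Decidable (F j a b)]
    (G : (Fin n → 𝒳) × (Fin n → 𝒴) × (Fin n → 𝒵) → γ) (t : γ)
    (hG : ∀ xs ys zs, G (xs, ys, zs) = t ↔ (D xs ∧ ∀ j, F j (ys j) (zs j))) :
    prob μ (fun ω => G (Xv ω, Yv ω, Zv ω)) t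
    = ∑ xs : Fin n → 𝒳, if D xs then prob μ Xv xs *
        ∏ j, (∑ y', ∑ z', if F j y' z' then Q (xs j) (fa (f xs).1 j) (y', z') else 0)
      else 0 := by
  classical
  have hTs : ∀ s : (Fin n → 𝒳) × (Fin n → 𝒴) × (Fin n → 𝒵),
      MeasurableSet ((fun ω => (Xv ω, Yv ω, Zv ω)) ⁻¹' {s}) := by
    rintro ⟨xs, ys, zs⟩
    have : (fun ω => (Xv ω, Yv ω, Zv ω)) ⁻¹' {(xs, ys, zs)}
        = (⋂ j, (fun ω => Xv ω j) ⁻¹' {xs j}) ∩ ((⋂ j, (fun ω => Yv ω j) ⁻¹' {ys j})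
          ∩ ⋂ j, (fun ω => Zv ω j) ⁻¹' {zs j}) := by
      ext ω
      simp [Prod.ext_iff, funext_iff, forall_and]
    rw [this]
    exact ((MeasurableSet.iInter fun j => hXm j (measurableSet_singleton _))).inter
      (((MeasurableSet.iInter fun j => hYm j (measurableSet_singleton _))).inter
        (MeasurableSet.iInter fun j => hZm j (measurableSet_singleton _)))
  rw [prob_comp μ _ hTs G t, Fintype.sum_prod_type]
  simp_rw [Fintype.sum_prod_type, hG]
  exact main_sum μ Xv Yv Zv f fa Q hchan D F

lemma condIndep_comp {Ω α β γ : Type*} [MeasurableSpace Ω] (μ : Measure Ω)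
    (V : Ω → γ) (B : Ω → β) (g : γ → α) (U : Ω → α) (hU : ∀ ω, U ω = g (V ω)) :
    CondIndepRV μ U B V := by
  intro u b v
  by_cases hu : g v = u
  · have h1 : (fun ω => ((U ω, B ω), V ω)) ⁻¹' {((u, b), v)}
        = (fun ω => (B ω, V ω)) ⁻¹' {(b, v)} := by
      ext ω
      simp only [Set.mem_preimage, Set.mem_singleton_iff, Prod.mk.injEq, hU]
      constructor
      · rintro ⟨⟨_, h2⟩, h3⟩; exact ⟨h2, h3⟩
      · rintro ⟨h2, h3⟩; exact ⟨⟨by rw [h3, hu], h2⟩, h3⟩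
    have h2 : (fun ω => (U ω, V ω)) ⁻¹' {(u, v)} = V ⁻¹' {v} := by
      ext ω
      simp only [Set.mem_preimage, Set.mem_singleton_iff, Prod.mk.injEq, hU]
      exact ⟨fun h => h.2, fun h => ⟨by rw [h, hu], h⟩⟩
    rw [prob, prob, prob, prob, h1, h2]
    ring
  · have h1 : (fun ω => ((U ω, B ω), V ω)) ⁻¹' {((u, b), v)} = ∅ := by
      ext ω
      simp only [Set.mem_preimage, Set.mem_singleton_iff, Prod.mk.injEq, hU,
        Set.mem_empty_iff_false, iff_false, not_and]
      rintro ⟨h, _⟩ h3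
      exact hu (h3 ▸ h)
    have h2 : (fun ω => (U ω, V ω)) ⁻¹' {(u, v)} = ∅ := by
      ext ω
      simp only [Set.mem_preimage, Set.mem_singleton_iff, Prod.mk.injEq, hU,
        Set.mem_empty_iff_false, iff_false, not_and]
      intro h h3
      exact hu (h3 ▸ h)
    simp only [prob, h1, h2]
    simp

lemma sum_sum_ite_pair {𝒴 𝒵 : Type*} [Fintype 𝒴] [Fintype 𝒵] [DecidableEq 𝒴] [DecidableEq 𝒵]
    (y : 𝒴) (z : 𝒵) (g : 𝒴 → 𝒵 → ℝ) :
    (∑ y' : 𝒴, ∑ z' : 𝒵, if y' = y ∧ z' = z then g y' z' else 0) = g y z := by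
  simp [ite_and, Finset.sum_ite_eq]

/-- extract the `i`-th factor from the product. -/
lemma extract_factor {𝒴 𝒵 : Type*} [Fintype 𝒴] [Fintype 𝒵] {n : ℕ} (i : Fin n)
    (QQ : Fin n → 𝒴 × 𝒵 → ℝ)
    (F F' : Fin n → 𝒴 → 𝒵 → Prop) [∀ j a b, Decidable (F j a b)]
    [∀ j a b, Decidable (F' j a b)] (e : ℝ)
    (hi : (∑ y', ∑ z', if F i y' z' then QQ i (y', z') else 0) = e)
    (hne : ∀ j, j ≠ i → ∀ y' z', F j y' z' ↔ F' j y' z') :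
    (∏ j, ∑ y', ∑ z', if F j y' z' then QQ j (y', z') else 0)
      = e * ∏ j ∈ Finset.univ.erase i, (∑ y', ∑ z', if F' j y' z' then QQ j (y', z') else 0) := by
  rw [← Finset.mul_prod_erase _ _ (Finset.mem_univ i), hi]
  congr 1
  refine Finset.prod_congr rfl fun j hj => ?_
  have hji : j ≠ i := (Finset.mem_erase.1 hj).1
  refine Finset.sum_congr rfl fun y' _ => Finset.sum_congr rfl fun z' _ => ?_
  rw [if_congr (hne j hji y' z') rfl rfl]

/-- For an i.i.d. source `X^n`, helper data and key `(W, K) = f(X^n)`, action sequence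
`A^n = f_a(W)`, and `(Y_i, Z_i)` generated from `(X^n, A^n)` by a memoryless channel
`Q = P_{YZ|XA}`, for every `i` the pair `(Y_i, Z_i)` is conditionally independent of
`(W, K, A^{n∖i}, X^{n∖i}, Y_{i+1}^n, Z^{i−1})` given `(A_i, X_i)`; in particular, with
`U_i = (W, A^{n∖i}, Y_{i+1}^n, Z^{i−1})` and `V_i = (W, K, A^{n∖i}, Y_{i+1}^n, Z^{i−1})`,
the Markov chain `U_i − V_i − (A_i, X_i) − (Y_i, Z_i)` holds. -/
theorem stmt15 {Ω 𝒳 𝒜 𝒴 𝒵 𝒲 𝒦 : Type*} [MeasurableSpace Ω]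
    (μ : Measure Ω) [IsProbabilityMeasure μ]
    [Fintype 𝒳] [Fintype 𝒜] [Fintype 𝒴] [Fintype 𝒵] [Fintype 𝒲] [Fintype 𝒦]
    [MeasurableSpace 𝒳] [MeasurableSingletonClass 𝒳]
    [MeasurableSpace 𝒜] [MeasurableSingletonClass 𝒜]
    [MeasurableSpace 𝒴] [MeasurableSingletonClass 𝒴]
    [MeasurableSpace 𝒵] [MeasurableSingletonClass 𝒵]
    [MeasurableSpace 𝒲] [MeasurableSingletonClass 𝒲]
    [MeasurableSpace 𝒦] [MeasurableSingletonClass 𝒦]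
    (n : ℕ)
    (Xv : Ω → Fin n → 𝒳) (Av : Ω → Fin n → 𝒜) (Yv : Ω → Fin n → 𝒴)
    (Zv : Ω → Fin n → 𝒵) (W : Ω → 𝒲) (K : Ω → 𝒦)
    (hXm : ∀ i, Measurable fun ω => Xv ω i) (hAm : ∀ i, Measurable fun ω => Av ω i)
    (hYm : ∀ i, Measurable fun ω => Yv ω i) (hZm : ∀ i, Measurable fun ω => Zv ω i)
    (hWm : Measurable W) (hKm : Measurable K)
    (PX : 𝒳 → ℝ)
    (hiid : ∀ xs : Fin n → 𝒳, prob μ Xv xs = ∏ i, PX (xs i))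
    (f : (Fin n → 𝒳) → 𝒲 × 𝒦) (hWK : ∀ ω, (W ω, K ω) = f (Xv ω))
    (fa : 𝒲 → Fin n → 𝒜) (hfa : ∀ ω, Av ω = fa (W ω))
    (Q : 𝒳 → 𝒜 → 𝒴 × 𝒵 → ℝ)
    (hchan : ∀ (xs : Fin n → 𝒳) (ys : Fin n → 𝒴) (zs : Fin n → 𝒵),
      prob μ (fun ω => (Xv ω, Yv ω, Zv ω)) (xs, ys, zs) =
        prob μ Xv xs * ∏ i, Q (xs i) (fa (f xs).1 i) (ys i, zs i)) :
    ∀ i : Fin n,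
      CondIndepRV μ (fun ω => (Yv ω i, Zv ω i))
        (fun ω => (W ω, K ω, strOmit Av i ω, strOmit Xv i ω, strSuffix Yv i ω,
          strPrefix Zv i ω))
        (fun ω => (Av ω i, Xv ω i)) ∧
      CondIndepRV μ
        (fun ω => (W ω, strOmit Av i ω, strSuffix Yv i ω, strPrefix Zv i ω))
        (fun ω => (Av ω i, Xv ω i, Yv ω i, Zv ω i))
        (fun ω => (W ω, K ω, strOmit Av i ω, strSuffix Yv i ω, strPrefix Zv i ω)) ∧
      CondIndepRV μ
        (fun ω => (W ω, K ω, strOmit Av i ω, strSuffix Yv i ω, strPrefix Zv i ω))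
        (fun ω => (Yv ω i, Zv ω i))
        (fun ω => (Av ω i, Xv ω i)) := by
  classical
  have hW : ∀ ω, W ω = (f (Xv ω)).1 := fun ω => by rw [← hWK ω]
  have hK' : ∀ ω, K ω = (f (Xv ω)).2 := fun ω => by rw [← hWK ω]
  have hA : ∀ ω, Av ω = fa (f (Xv ω)).1 := fun ω => by rw [hfa ω, hW ω]
  intro i
  refine ⟨?_, condIndep_comp μ _ _ (fun p => (p.1, p.2.2.1, p.2.2.2.1, p.2.2.2.2)) _
    (fun ω => rfl), ?_⟩
  · rintro ⟨y, z⟩ ⟨w, k, ao, xo, ysuf, zpre⟩ ⟨a, x⟩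
    beta_reduce
    have hP1 : prob μ (fun ω => (((Yv ω i, Zv ω i), (W ω, K ω, strOmit Av i ω, strOmit Xv i ω, strSuffix Yv i ω, strPrefix Zv i ω)), (Av ω i, Xv ω i))) (((y, z), (w, k, ao, xo, ysuf, zpre)), (a, x))
        = (if ysuf i = none ∧ zpre i = none then Q x a (y, z) else 0) * (∑ xs : Fin n → 𝒳, if (f xs).1 = w ∧ (f xs).2 = k ∧ (∀ j : Fin n, (if j = i then none else some (fa (f xs).1 j)) = ao j) ∧ (∀ j : Fin n, (if j = i then none else some (xs j)) = xo j) ∧ fa (f xs).1 i = a ∧ xs i = x then prob μ Xv xs * ∏ j ∈ Finset.univ.erase i, (∑ y' : 𝒴, ∑ z' : 𝒵, if ((if (i : ℕ) < (j : ℕ) then some y' else none) = ysuf j) ∧ ((if (j : ℕ) < (i : ℕ) then some z' else none) = zpre j) then Q (xs j) (fa (f xs).1 j) (y', z') else 0) else 0) := by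
      have hfun : (fun ω : Ω => (((Yv ω i, Zv ω i), (W ω, K ω, strOmit Av i ω, strOmit Xv i ω, strSuffix Yv i ω, strPrefix Zv i ω)), (Av ω i, Xv ω i)))
          = (fun ω => (fun s : (Fin n → 𝒳) × (Fin n → 𝒴) × (Fin n → 𝒵) => (((s.2.1 i, s.2.2 i), ((f s.1).1, (f s.1).2, (fun j : Fin n => if j = i then none else some (fa (f s.1).1 j)), (fun j : Fin n => if j = i then none else some (s.1 j)), (fun j : Fin n => if (i : ℕ) < (j : ℕ) then some (s.2.1 j) else none), (fun j : Fin n => if (j : ℕ) < (i : ℕ) then some (s.2.2 j) else none))), (fa (f s.1).1 i, s.1 i))) (Xv ω, Yv ω, Zv ω)) := by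
        funext ω
        unfold strOmit strSuffix strPrefix
        simp only [hA ω, hW ω, hK' ω]
      rw [hfun, prob_factored μ Xv Yv Zv hXm hYm hZm f fa Q hchan
          (fun xs : Fin n → 𝒳 => (f xs).1 = w ∧ (f xs).2 = k ∧ (∀ j : Fin n, (if j = i then none else some (fa (f xs).1 j)) = ao j) ∧ (∀ j : Fin n, (if j = i then none else some (xs j)) = xo j) ∧ fa (f xs).1 i = a ∧ xs i = x)
          (fun (j : Fin n) (y' : 𝒴) (z' : 𝒵) => ((if (i : ℕ) < (j : ℕ) then some y' else none) = ysuf j) ∧ ((if (j : ℕ) < (i : ℕ) then some z' else none) = zpre j) ∧ (j = i → y' = y ∧ z' = z))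
          (fun s : (Fin n → 𝒳) × (Fin n → 𝒴) × (Fin n → 𝒵) => (((s.2.1 i, s.2.2 i), ((f s.1).1, (f s.1).2, (fun j : Fin n => if j = i then none else some (fa (f s.1).1 j)), (fun j : Fin n => if j = i then none else some (s.1 j)), (fun j : Fin n => if (i : ℕ) < (j : ℕ) then some (s.2.1 j) else none), (fun j : Fin n => if (j : ℕ) < (i : ℕ) then some (s.2.2 j) else none))), (fa (f s.1).1 i, s.1 i))) (((y, z), (w, k, ao, xo, ysuf, zpre)), (a, x))
          (by
            intro xs ys zs
            simp only [Prod.mk.injEq, funext_iff]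
            constructor
            · rintro ⟨⟨⟨hy, hz⟩, h1, h2, h3, h4, h5, h6⟩, ha, hx⟩
              exact ⟨⟨h1, h2, h3, h4, ha, hx⟩,
                fun j => ⟨h5 j, h6 j, fun hj => by subst hj; exact ⟨hy, hz⟩⟩⟩
            · rintro ⟨⟨h1, h2, h3, h4, ha, hx⟩, hF⟩
              exact ⟨⟨(hF i).2.2 rfl, h1, h2, h3, h4, fun j => (hF j).1, fun j => (hF j).2.1⟩,
                ha, hx⟩)]
      rw [Finset.mul_sum]
      refine Finset.sum_congr rfl fun xs _ => ?_
      beta_reduce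
      by_cases hD : (f xs).1 = w ∧ (f xs).2 = k ∧ (∀ j : Fin n, (if j = i then none else some (fa (f xs).1 j)) = ao j) ∧ (∀ j : Fin n, (if j = i then none else some (xs j)) = xo j) ∧ fa (f xs).1 i = a ∧ xs i = x
      · rw [if_pos hD, if_pos hD]
        have hx : xs i = x := hD.2.2.2.2.2
        have ha : fa (f xs).1 i = a := hD.2.2.2.2.1
        have hex : (∏ j : Fin n, (∑ y' : 𝒴, ∑ z' : 𝒵, if ((if (i : ℕ) < (j : ℕ) then some y' else none) = ysuf j) ∧ ((if (j : ℕ) < (i : ℕ) then some z' else none) = zpre j) ∧ (j = i → y' = y ∧ z' = z) then Q (xs j) (fa (f xs).1 j) (y', z') else 0))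
            = (if ysuf i = none ∧ zpre i = none then Q x a (y, z) else 0) * ∏ j ∈ Finset.univ.erase i, (∑ y' : 𝒴, ∑ z' : 𝒵, if ((if (i : ℕ) < (j : ℕ) then some y' else none) = ysuf j) ∧ ((if (j : ℕ) < (i : ℕ) then some z' else none) = zpre j) then Q (xs j) (fa (f xs).1 j) (y', z') else 0) := by
          refine extract_factor i (fun (j : Fin n) (p : 𝒴 × 𝒵) => Q (xs j) (fa (f xs).1 j) p)
            _ _ _ ?_ ?_
          · simp only [hx, ha]
            by_cases hwf : ysuf i = none ∧ zpre i = none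
            · rw [if_pos hwf]
              refine Eq.trans (Finset.sum_congr rfl fun y' _ => Finset.sum_congr rfl fun z' _ =>
                if_congr ?_ rfl rfl) (sum_sum_ite_pair y z _)
              simp [lt_self_iff_false, hwf.1, hwf.2]
            · rw [if_neg hwf]
              refine Finset.sum_eq_zero fun y' _ => Finset.sum_eq_zero fun z' _ => ?_
              rw [if_neg]
              rintro ⟨h1, h2, -⟩
              rw [if_neg (lt_irrefl _)] at h1 h2
              exact hwf ⟨h1.symm, h2.symm⟩
          · exact fun j hj y' z' => ⟨fun h => ⟨h.1, h.2.1⟩, fun h => ⟨h.1, h.2, fun hji => absurd hji hj⟩⟩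
        rw [hex]
        ring
      · rw [if_neg hD, if_neg hD, mul_zero]
    have hP2 : prob μ (fun ω => ((W ω, K ω, strOmit Av i ω, strOmit Xv i ω, strSuffix Yv i ω, strPrefix Zv i ω), (Av ω i, Xv ω i))) ((w, k, ao, xo, ysuf, zpre), (a, x))
        = (if ysuf i = none ∧ zpre i = none then (∑ y' : 𝒴, ∑ z' : 𝒵, Q x a (y', z')) else 0) * (∑ xs : Fin n → 𝒳, if (f xs).1 = w ∧ (f xs).2 = k ∧ (∀ j : Fin n, (if j = i then none else some (fa (f xs).1 j)) = ao j) ∧ (∀ j : Fin n, (if j = i then none else some (xs j)) = xo j) ∧ fa (f xs).1 i = a ∧ xs i = x then prob μ Xv xs * ∏ j ∈ Finset.univ.erase i, (∑ y' : 𝒴, ∑ z' : 𝒵, if ((if (i : ℕ) < (j : ℕ) then some y' else none) = ysuf j) ∧ ((if (j : ℕ) < (i : ℕ) then some z' else none) = zpre j) then Q (xs j) (fa (f xs).1 j) (y', z') else 0) else 0) := by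
      have hfun : (fun ω : Ω => ((W ω, K ω, strOmit Av i ω, strOmit Xv i ω, strSuffix Yv i ω, strPrefix Zv i ω), (Av ω i, Xv ω i)))
          = (fun ω => (fun s : (Fin n → 𝒳) × (Fin n → 𝒴) × (Fin n → 𝒵) => (((f s.1).1, (f s.1).2, (fun j : Fin n => if j = i then none else some (fa (f s.1).1 j)), (fun j : Fin n => if j = i then none else some (s.1 j)), (fun j : Fin n => if (i : ℕ) < (j : ℕ) then some (s.2.1 j) else none), (fun j : Fin n => if (j : ℕ) < (i : ℕ) then some (s.2.2 j) else none)), (fa (f s.1).1 i, s.1 i))) (Xv ω, Yv ω, Zv ω)) := by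
        funext ω
        unfold strOmit strSuffix strPrefix
        simp only [hA ω, hW ω, hK' ω]
      rw [hfun, prob_factored μ Xv Yv Zv hXm hYm hZm f fa Q hchan
          (fun xs : Fin n → 𝒳 => (f xs).1 = w ∧ (f xs).2 = k ∧ (∀ j : Fin n, (if j = i then none else some (fa (f xs).1 j)) = ao j) ∧ (∀ j : Fin n, (if j = i then none else some (xs j)) = xo j) ∧ fa (f xs).1 i = a ∧ xs i = x)
          (fun (j : Fin n) (y' : 𝒴) (z' : 𝒵) => ((if (i : ℕ) < (j : ℕ) then some y' else none) = ysuf j) ∧ ((if (j : ℕ) < (i : ℕ) then some z' else none) = zpre j))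
          (fun s : (Fin n → 𝒳) × (Fin n → 𝒴) × (Fin n → 𝒵) => (((f s.1).1, (f s.1).2, (fun j : Fin n => if j = i then none else some (fa (f s.1).1 j)), (fun j : Fin n => if j = i then none else some (s.1 j)), (fun j : Fin n => if (i : ℕ) < (j : ℕ) then some (s.2.1 j) else none), (fun j : Fin n => if (j : ℕ) < (i : ℕ) then some (s.2.2 j) else none)), (fa (f s.1).1 i, s.1 i))) ((w, k, ao, xo, ysuf, zpre), (a, x))
          (by
            intro xs ys zs
            simp only [Prod.mk.injEq, funext_iff]
            constructor
            · rintro ⟨⟨h1, h2, h3, h4, h5, h6⟩, ha, hx⟩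
              exact ⟨⟨h1, h2, h3, h4, ha, hx⟩, fun j => ⟨h5 j, h6 j⟩⟩
            · rintro ⟨⟨h1, h2, h3, h4, ha, hx⟩, hF⟩
              exact ⟨⟨h1, h2, h3, h4, fun j => (hF j).1, fun j => (hF j).2⟩, ha, hx⟩)]
      rw [Finset.mul_sum]
      refine Finset.sum_congr rfl fun xs _ => ?_
      beta_reduce
      by_cases hD : (f xs).1 = w ∧ (f xs).2 = k ∧ (∀ j : Fin n, (if j = i then none else some (fa (f xs).1 j)) = ao j) ∧ (∀ j : Fin n, (if j = i then none else some (xs j)) = xo j) ∧ fa (f xs).1 i = a ∧ xs i = x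
      · rw [if_pos hD, if_pos hD]
        have hx : xs i = x := hD.2.2.2.2.2
        have ha : fa (f xs).1 i = a := hD.2.2.2.2.1
        have hex : (∏ j : Fin n, (∑ y' : 𝒴, ∑ z' : 𝒵, if ((if (i : ℕ) < (j : ℕ) then some y' else none) = ysuf j) ∧ ((if (j : ℕ) < (i : ℕ) then some z' else none) = zpre j) then Q (xs j) (fa (f xs).1 j) (y', z') else 0))
            = (if ysuf i = none ∧ zpre i = none then (∑ y' : 𝒴, ∑ z' : 𝒵, Q x a (y', z')) else 0) * ∏ j ∈ Finset.univ.erase i, (∑ y' : 𝒴, ∑ z' : 𝒵, if ((if (i : ℕ) < (j : ℕ) then some y' else none) = ysuf j) ∧ ((if (j : ℕ) < (i : ℕ) then some z' else none) = zpre j) then Q (xs j) (fa (f xs).1 j) (y', z') else 0) := by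
          refine extract_factor i (fun (j : Fin n) (p : 𝒴 × 𝒵) => Q (xs j) (fa (f xs).1 j) p)
            _ _ _ ?_ ?_
          · simp only [hx, ha]
            by_cases hwf : ysuf i = none ∧ zpre i = none
            · rw [if_pos hwf]
              refine Finset.sum_congr rfl fun y' _ => Finset.sum_congr rfl fun z' _ => if_pos ?_
              exact ⟨by rw [hwf.1, if_neg (lt_irrefl _)], by rw [hwf.2, if_neg (lt_irrefl _)]⟩
            · rw [if_neg hwf]
              refine Finset.sum_eq_zero fun y' _ => Finset.sum_eq_zero fun z' _ => ?_
              rw [if_neg]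
              rintro ⟨h1, h2⟩
              rw [if_neg (lt_irrefl _)] at h1 h2
              exact hwf ⟨h1.symm, h2.symm⟩
          · exact fun j hj y' z' => Iff.rfl
        rw [hex]
        ring
      · rw [if_neg hD, if_neg hD, mul_zero]
    have hP3 : prob μ (fun ω => ((Yv ω i, Zv ω i), (Av ω i, Xv ω i))) ((y, z), (a, x))
        = Q x a (y, z) * (∑ xs : Fin n → 𝒳, if fa (f xs).1 i = a ∧ xs i = x then prob μ Xv xs * ∏ j ∈ Finset.univ.erase i, (∑ y' : 𝒴, ∑ z' : 𝒵, if True then Q (xs j) (fa (f xs).1 j) (y', z') else 0) else 0) := by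
      have hfun : (fun ω : Ω => ((Yv ω i, Zv ω i), (Av ω i, Xv ω i)))
          = (fun ω => (fun s : (Fin n → 𝒳) × (Fin n → 𝒴) × (Fin n → 𝒵) => ((s.2.1 i, s.2.2 i), (fa (f s.1).1 i, s.1 i))) (Xv ω, Yv ω, Zv ω)) := by
        funext ω
        simp only [hA ω]
      rw [hfun, prob_factored μ Xv Yv Zv hXm hYm hZm f fa Q hchan
          (fun xs : Fin n → 𝒳 => fa (f xs).1 i = a ∧ xs i = x)
          (fun (j : Fin n) (y' : 𝒴) (z' : 𝒵) => (j = i → y' = y ∧ z' = z))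
          (fun s : (Fin n → 𝒳) × (Fin n → 𝒴) × (Fin n → 𝒵) => ((s.2.1 i, s.2.2 i), (fa (f s.1).1 i, s.1 i))) ((y, z), (a, x))
          (by
            intro xs ys zs
            simp only [Prod.mk.injEq, funext_iff]
            constructor
            · rintro ⟨⟨hy, hz⟩, ha, hx⟩
              exact ⟨⟨ha, hx⟩, fun j hj => by subst hj; exact ⟨hy, hz⟩⟩
            · rintro ⟨⟨ha, hx⟩, hF⟩
              exact ⟨hF i rfl, ha, hx⟩)]
      rw [Finset.mul_sum]
      refine Finset.sum_congr rfl fun xs _ => ?_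
      beta_reduce
      by_cases hD : fa (f xs).1 i = a ∧ xs i = x
      · rw [if_pos hD, if_pos hD]
        have hx : xs i = x := hD.2
        have ha : fa (f xs).1 i = a := hD.1
        have hex : (∏ j : Fin n, (∑ y' : 𝒴, ∑ z' : 𝒵, if (j = i → y' = y ∧ z' = z) then Q (xs j) (fa (f xs).1 j) (y', z') else 0))
            = Q x a (y, z) * ∏ j ∈ Finset.univ.erase i, (∑ y' : 𝒴, ∑ z' : 𝒵, if True then Q (xs j) (fa (f xs).1 j) (y', z') else 0) := by
          refine extract_factor i (fun (j : Fin n) (p : 𝒴 × 𝒵) => Q (xs j) (fa (f xs).1 j) p)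
            _ _ _ ?_ ?_
          · simp only [hx, ha]
            refine Eq.trans (Finset.sum_congr rfl fun y' _ => Finset.sum_congr rfl fun z' _ =>
                if_congr ?_ rfl rfl) (sum_sum_ite_pair y z _)
            simp
          · exact fun j hj y' z' => ⟨fun _ => trivial, fun _ hji => absurd hji hj⟩
        rw [hex]
        ring
      · rw [if_neg hD, if_neg hD, mul_zero]
    have hP4 : prob μ (fun ω => (Av ω i, Xv ω i)) (a, x)
        = (∑ y' : 𝒴, ∑ z' : 𝒵, Q x a (y', z')) * (∑ xs : Fin n → 𝒳, if fa (f xs).1 i = a ∧ xs i = x then prob μ Xv xs * ∏ j ∈ Finset.univ.erase i, (∑ y' : 𝒴, ∑ z' : 𝒵, if True then Q (xs j) (fa (f xs).1 j) (y', z') else 0) else 0) := by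
      have hfun : (fun ω : Ω => (Av ω i, Xv ω i))
          = (fun ω => (fun s : (Fin n → 𝒳) × (Fin n → 𝒴) × (Fin n → 𝒵) => (fa (f s.1).1 i, s.1 i)) (Xv ω, Yv ω, Zv ω)) := by
        funext ω
        simp only [hA ω]
      rw [hfun, prob_factored μ Xv Yv Zv hXm hYm hZm f fa Q hchan
          (fun xs : Fin n → 𝒳 => fa (f xs).1 i = a ∧ xs i = x)
          (fun (j : Fin n) (y' : 𝒴) (z' : 𝒵) => True)
          (fun s : (Fin n → 𝒳) × (Fin n → 𝒴) × (Fin n → 𝒵) => (fa (f s.1).1 i, s.1 i)) (a, x)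
          (by
            intro xs ys zs
            simp only [Prod.mk.injEq, funext_iff]
            constructor
            · exact fun h => ⟨h, fun j => trivial⟩
            · exact fun h => h.1)]
      rw [Finset.mul_sum]
      refine Finset.sum_congr rfl fun xs _ => ?_
      beta_reduce
      by_cases hD : fa (f xs).1 i = a ∧ xs i = x
      · rw [if_pos hD, if_pos hD]
        have hx : xs i = x := hD.2
        have ha : fa (f xs).1 i = a := hD.1
        have hex : (∏ j : Fin n, (∑ y' : 𝒴, ∑ z' : 𝒵, if True then Q (xs j) (fa (f xs).1 j) (y', z') else 0))
            = (∑ y' : 𝒴, ∑ z' : 𝒵, Q x a (y', z')) * ∏ j ∈ Finset.univ.erase i, (∑ y' : 𝒴, ∑ z' : 𝒵, if True then Q (xs j) (fa (f xs).1 j) (y', z') else 0) := by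
          refine extract_factor i (fun (j : Fin n) (p : 𝒴 × 𝒵) => Q (xs j) (fa (f xs).1 j) p)
            _ _ _ ?_ ?_
          · simp only [hx, ha]
            exact Finset.sum_congr rfl fun y' _ => Finset.sum_congr rfl fun z' _ => if_pos trivial
          · exact fun j hj y' z' => Iff.rfl
        rw [hex]
        ring
      · rw [if_neg hD, if_neg hD, mul_zero]
    rw [hP1, hP2, hP3, hP4]
    by_cases hwf : ysuf i = none ∧ zpre i = none
    · rw [if_pos hwf, if_pos hwf]
      ring
    · rw [if_neg hwf, if_neg hwf]
      ring
  · rintro ⟨w, k, ao, ysuf, zpre⟩ ⟨y, z⟩ ⟨a, x⟩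
    beta_reduce
    have hP1 : prob μ (fun ω => (((W ω, K ω, strOmit Av i ω, strSuffix Yv i ω, strPrefix Zv i ω), (Yv ω i, Zv ω i)), (Av ω i, Xv ω i))) (((w, k, ao, ysuf, zpre), (y, z)), (a, x))
        = (if ysuf i = none ∧ zpre i = none then Q x a (y, z) else 0) * (∑ xs : Fin n → 𝒳, if (f xs).1 = w ∧ (f xs).2 = k ∧ (∀ j : Fin n, (if j = i then none else some (fa (f xs).1 j)) = ao j) ∧ fa (f xs).1 i = a ∧ xs i = x then prob μ Xv xs * ∏ j ∈ Finset.univ.erase i, (∑ y' : 𝒴, ∑ z' : 𝒵, if ((if (i : ℕ) < (j : ℕ) then some y' else none) = ysuf j) ∧ ((if (j : ℕ) < (i : ℕ) then some z' else none) = zpre j) then Q (xs j) (fa (f xs).1 j) (y', z') else 0) else 0) := by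
      have hfun : (fun ω : Ω => (((W ω, K ω, strOmit Av i ω, strSuffix Yv i ω, strPrefix Zv i ω), (Yv ω i, Zv ω i)), (Av ω i, Xv ω i)))
          = (fun ω => (fun s : (Fin n → 𝒳) × (Fin n → 𝒴) × (Fin n → 𝒵) => ((((f s.1).1, (f s.1).2, (fun j : Fin n => if j = i then none else some (fa (f s.1).1 j)), (fun j : Fin n => if (i : ℕ) < (j : ℕ) then some (s.2.1 j) else none), (fun j : Fin n => if (j : ℕ) < (i : ℕ) then some (s.2.2 j) else none)), (s.2.1 i, s.2.2 i)), (fa (f s.1).1 i, s.1 i))) (Xv ω, Yv ω, Zv ω)) := by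
        funext ω
        unfold strOmit strSuffix strPrefix
        simp only [hA ω, hW ω, hK' ω]
      rw [hfun, prob_factored μ Xv Yv Zv hXm hYm hZm f fa Q hchan
          (fun xs : Fin n → 𝒳 => (f xs).1 = w ∧ (f xs).2 = k ∧ (∀ j : Fin n, (if j = i then none else some (fa (f xs).1 j)) = ao j) ∧ fa (f xs).1 i = a ∧ xs i = x)
          (fun (j : Fin n) (y' : 𝒴) (z' : 𝒵) => ((if (i : ℕ) < (j : ℕ) then some y' else none) = ysuf j) ∧ ((if (j : ℕ) < (i : ℕ) then some z' else none) = zpre j) ∧ (j = i → y' = y ∧ z' = z))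
          (fun s : (Fin n → 𝒳) × (Fin n → 𝒴) × (Fin n → 𝒵) => ((((f s.1).1, (f s.1).2, (fun j : Fin n => if j = i then none else some (fa (f s.1).1 j)), (fun j : Fin n => if (i : ℕ) < (j : ℕ) then some (s.2.1 j) else none), (fun j : Fin n => if (j : ℕ) < (i : ℕ) then some (s.2.2 j) else none)), (s.2.1 i, s.2.2 i)), (fa (f s.1).1 i, s.1 i))) (((w, k, ao, ysuf, zpre), (y, z)), (a, x))
          (by
            intro xs ys zs
            simp only [Prod.mk.injEq, funext_iff]
            constructor
            · rintro ⟨⟨⟨h1, h2, h3, h5, h6⟩, hy, hz⟩, ha, hx⟩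
              exact ⟨⟨h1, h2, h3, ha, hx⟩,
                fun j => ⟨h5 j, h6 j, fun hj => by subst hj; exact ⟨hy, hz⟩⟩⟩
            · rintro ⟨⟨h1, h2, h3, ha, hx⟩, hF⟩
              exact ⟨⟨⟨h1, h2, h3, fun j => (hF j).1, fun j => (hF j).2.1⟩, (hF i).2.2 rfl⟩,
                ha, hx⟩)]
      rw [Finset.mul_sum]
      refine Finset.sum_congr rfl fun xs _ => ?_
      beta_reduce
      by_cases hD : (f xs).1 = w ∧ (f xs).2 = k ∧ (∀ j : Fin n, (if j = i then none else some (fa (f xs).1 j)) = ao j) ∧ fa (f xs).1 i = a ∧ xs i = x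
      · rw [if_pos hD, if_pos hD]
        have hx : xs i = x := hD.2.2.2.2
        have ha : fa (f xs).1 i = a := hD.2.2.2.1
        have hex : (∏ j : Fin n, (∑ y' : 𝒴, ∑ z' : 𝒵, if ((if (i : ℕ) < (j : ℕ) then some y' else none) = ysuf j) ∧ ((if (j : ℕ) < (i : ℕ) then some z' else none) = zpre j) ∧ (j = i → y' = y ∧ z' = z) then Q (xs j) (fa (f xs).1 j) (y', z') else 0))
            = (if ysuf i = none ∧ zpre i = none then Q x a (y, z) else 0) * ∏ j ∈ Finset.univ.erase i, (∑ y' : 𝒴, ∑ z' : 𝒵, if ((if (i : ℕ) < (j : ℕ) then some y' else none) = ysuf j) ∧ ((if (j : ℕ) < (i : ℕ) then some z' else none) = zpre j) then Q (xs j) (fa (f xs).1 j) (y', z') else 0) := by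
          refine extract_factor i (fun (j : Fin n) (p : 𝒴 × 𝒵) => Q (xs j) (fa (f xs).1 j) p)
            _ _ _ ?_ ?_
          · simp only [hx, ha]
            by_cases hwf : ysuf i = none ∧ zpre i = none
            · rw [if_pos hwf]
              refine Eq.trans (Finset.sum_congr rfl fun y' _ => Finset.sum_congr rfl fun z' _ =>
                if_congr ?_ rfl rfl) (sum_sum_ite_pair y z _)
              simp [lt_self_iff_false, hwf.1, hwf.2]
            · rw [if_neg hwf]
              refine Finset.sum_eq_zero fun y' _ => Finset.sum_eq_zero fun z' _ => ?_
              rw [if_neg]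
              rintro ⟨h1, h2, -⟩
              rw [if_neg (lt_irrefl _)] at h1 h2
              exact hwf ⟨h1.symm, h2.symm⟩
          · exact fun j hj y' z' => ⟨fun h => ⟨h.1, h.2.1⟩, fun h => ⟨h.1, h.2, fun hji => absurd hji hj⟩⟩
        rw [hex]
        ring
      · rw [if_neg hD, if_neg hD, mul_zero]
    have hP2 : prob μ (fun ω => ((W ω, K ω, strOmit Av i ω, strSuffix Yv i ω, strPrefix Zv i ω), (Av ω i, Xv ω i))) ((w, k, ao, ysuf, zpre), (a, x))
        = (if ysuf i = none ∧ zpre i = none then (∑ y' : 𝒴, ∑ z' : 𝒵, Q x a (y', z')) else 0) * (∑ xs : Fin n → 𝒳, if (f xs).1 = w ∧ (f xs).2 = k ∧ (∀ j : Fin n, (if j = i then none else some (fa (f xs).1 j)) = ao j) ∧ fa (f xs).1 i = a ∧ xs i = x then prob μ Xv xs * ∏ j ∈ Finset.univ.erase i, (∑ y' : 𝒴, ∑ z' : 𝒵, if ((if (i : ℕ) < (j : ℕ) then some y' else none) = ysuf j) ∧ ((if (j : ℕ) < (i : ℕ) then some z' else none) = zpre j) then Q (xs j) (fa (f xs).1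 j) (y', z') else 0) else 0) := by
      have hfun : (fun ω : Ω => ((W ω, K ω, strOmit Av i ω, strSuffix Yv i ω, strPrefix Zv i ω), (Av ω i, Xv ω i)))
          = (fun ω => (fun s : (Fin n → 𝒳) × (Fin n → 𝒴) × (Fin n → 𝒵) => (((f s.1).1, (f s.1).2, (fun j : Fin n => if j = i then none else some (fa (f s.1).1 j)), (fun j : Fin n => if (i : ℕ) < (j : ℕ) then some (s.2.1 j) else none), (fun j : Fin n => if (j : ℕ) < (i : ℕ) then some (s.2.2 j) else none)), (fa (f s.1).1 i, s.1 i))) (Xv ω, Yv ω, Zv ω)) := by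
        funext ω
        unfold strOmit strSuffix strPrefix
        simp only [hA ω, hW ω, hK' ω]
      rw [hfun, prob_factored μ Xv Yv Zv hXm hYm hZm f fa Q hchan
          (fun xs : Fin n → 𝒳 => (f xs).1 = w ∧ (f xs).2 = k ∧ (∀ j : Fin n, (if j = i then none else some (fa (f xs).1 j)) = ao j) ∧ fa (f xs).1 i = a ∧ xs i = x)
          (fun (j : Fin n) (y' : 𝒴) (z' : 𝒵) => ((if (i : ℕ) < (j : ℕ) then some y' else none) = ysuf j) ∧ ((if (j : ℕ) < (i : ℕ) then some z' else none) = zpre j))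
          (fun s : (Fin n → 𝒳) × (Fin n → 𝒴) × (Fin n → 𝒵) => (((f s.1).1, (f s.1).2, (fun j : Fin n => if j = i then none else some (fa (f s.1).1 j)), (fun j : Fin n => if (i : ℕ) < (j : ℕ) then some (s.2.1 j) else none), (fun j : Fin n => if (j : ℕ) < (i : ℕ) then some (s.2.2 j) else none)), (fa (f s.1).1 i, s.1 i))) ((w, k, ao, ysuf, zpre), (a, x))
          (by
            intro xs ys zs
            simp only [Prod.mk.injEq, funext_iff]
            constructor
            · rintro ⟨⟨h1, h2, h3, h5, h6⟩, ha, hx⟩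
              exact ⟨⟨h1, h2, h3, ha, hx⟩, fun j => ⟨h5 j, h6 j⟩⟩
            · rintro ⟨⟨h1, h2, h3, ha, hx⟩, hF⟩
              exact ⟨⟨h1, h2, h3, fun j => (hF j).1, fun j => (hF j).2⟩, ha, hx⟩)]
      rw [Finset.mul_sum]
      refine Finset.sum_congr rfl fun xs _ => ?_
      beta_reduce
      by_cases hD : (f xs).1 = w ∧ (f xs).2 = k ∧ (∀ j : Fin n, (if j = i then none else some (fa (f xs).1 j)) = ao j) ∧ fa (f xs).1 i = a ∧ xs i = x
      · rw [if_pos hD, if_pos hD]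
        have hx : xs i = x := hD.2.2.2.2
        have ha : fa (f xs).1 i = a := hD.2.2.2.1
        have hex : (∏ j : Fin n, (∑ y' : 𝒴, ∑ z' : 𝒵, if ((if (i : ℕ) < (j : ℕ) then some y' else none) = ysuf j) ∧ ((if (j : ℕ) < (i : ℕ) then some z' else none) = zpre j) then Q (xs j) (fa (f xs).1 j) (y', z') else 0))
            = (if ysuf i = none ∧ zpre i = none then (∑ y' : 𝒴, ∑ z' : 𝒵, Q x a (y', z')) else 0) * ∏ j ∈ Finset.univ.erase i, (∑ y' : 𝒴, ∑ z' : 𝒵, if ((if (i : ℕ) < (j : ℕ) then some y' else none) = ysuf j) ∧ ((if (j : ℕ) < (i : ℕ) then some z' else none) = zpre j) then Q (xs j) (fa (f xs).1 j) (y', z') else 0) := by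
          refine extract_factor i (fun (j : Fin n) (p : 𝒴 × 𝒵) => Q (xs j) (fa (f xs).1 j) p)
            _ _ _ ?_ ?_
          · simp only [hx, ha]
            by_cases hwf : ysuf i = none ∧ zpre i = none
            · rw [if_pos hwf]
              refine Finset.sum_congr rfl fun y' _ => Finset.sum_congr rfl fun z' _ => if_pos ?_
              exact ⟨by rw [hwf.1, if_neg (lt_irrefl _)], by rw [hwf.2, if_neg (lt_irrefl _)]⟩
            · rw [if_neg hwf]
              refine Finset.sum_eq_zero fun y' _ => Finset.sum_eq_zero fun z' _ => ?_
              rw [if_neg]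
              rintro ⟨h1, h2⟩
              rw [if_neg (lt_irrefl _)] at h1 h2
              exact hwf ⟨h1.symm, h2.symm⟩
          · exact fun j hj y' z' => Iff.rfl
        rw [hex]
        ring
      · rw [if_neg hD, if_neg hD, mul_zero]
    have hP3 : prob μ (fun ω => ((Yv ω i, Zv ω i), (Av ω i, Xv ω i))) ((y, z), (a, x))
        = Q x a (y, z) * (∑ xs : Fin n → 𝒳, if fa (f xs).1 i = a ∧ xs i = x then prob μ Xv xs * ∏ j ∈ Finset.univ.erase i, (∑ y' : 𝒴, ∑ z' : 𝒵, if True then Q (xs j) (fa (f xs).1 j) (y', z') else 0) else 0) := by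
      have hfun : (fun ω : Ω => ((Yv ω i, Zv ω i), (Av ω i, Xv ω i)))
          = (fun ω => (fun s : (Fin n → 𝒳) × (Fin n → 𝒴) × (Fin n → 𝒵) => ((s.2.1 i, s.2.2 i), (fa (f s.1).1 i, s.1 i))) (Xv ω, Yv ω, Zv ω)) := by
        funext ω
        simp only [hA ω]
      rw [hfun, prob_factored μ Xv Yv Zv hXm hYm hZm f fa Q hchan
          (fun xs : Fin n → 𝒳 => fa (f xs).1 i = a ∧ xs i = x)
          (fun (j : Fin n) (y' : 𝒴) (z' : 𝒵) => (j = i → y' = y ∧ z' = z))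
          (fun s : (Fin n → 𝒳) × (Fin n → 𝒴) × (Fin n → 𝒵) => ((s.2.1 i, s.2.2 i), (fa (f s.1).1 i, s.1 i))) ((y, z), (a, x))
          (by
            intro xs ys zs
            simp only [Prod.mk.injEq, funext_iff]
            constructor
            · rintro ⟨⟨hy, hz⟩, ha, hx⟩
              exact ⟨⟨ha, hx⟩, fun j hj => by subst hj; exact ⟨hy, hz⟩⟩
            · rintro ⟨⟨ha, hx⟩, hF⟩
              exact ⟨hF i rfl, ha, hx⟩)]
      rw [Finset.mul_sum]
      refine Finset.sum_congr rfl fun xs _ => ?_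
      beta_reduce
      by_cases hD : fa (f xs).1 i = a ∧ xs i = x
      · rw [if_pos hD, if_pos hD]
        have hx : xs i = x := hD.2
        have ha : fa (f xs).1 i = a := hD.1
        have hex : (∏ j : Fin n, (∑ y' : 𝒴, ∑ z' : 𝒵, if (j = i → y' = y ∧ z' = z) then Q (xs j) (fa (f xs).1 j) (y', z') else 0))
            = Q x a (y, z) * ∏ j ∈ Finset.univ.erase i, (∑ y' : 𝒴, ∑ z' : 𝒵, if True then Q (xs j) (fa (f xs).1 j) (y', z') else 0) := by
          refine extract_factor i (fun (j : Fin n) (p : 𝒴 × 𝒵) => Q (xs j) (fa (f xs).1 j) p)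
            _ _ _ ?_ ?_
          · simp only [hx, ha]
            refine Eq.trans (Finset.sum_congr rfl fun y' _ => Finset.sum_congr rfl fun z' _ =>
                if_congr ?_ rfl rfl) (sum_sum_ite_pair y z _)
            simp
          · exact fun j hj y' z' => ⟨fun _ => trivial, fun _ hji => absurd hji hj⟩
        rw [hex]
        ring
      · rw [if_neg hD, if_neg hD, mul_zero]
    have hP4 : prob μ (fun ω => (Av ω i, Xv ω i)) (a, x)
        = (∑ y' : 𝒴, ∑ z' : 𝒵, Q x a (y', z')) * (∑ xs : Fin n → 𝒳, if fa (f xs).1 i = a ∧ xs i = x then prob μ Xv xs * ∏ j ∈ Finset.univ.erase i, (∑ y' : 𝒴, ∑ z' : 𝒵, if True then Q (xs j) (fa (f xs).1 j) (y', z') else 0) else 0) := by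
      have hfun : (fun ω : Ω => (Av ω i, Xv ω i))
          = (fun ω => (fun s : (Fin n → 𝒳) × (Fin n → 𝒴) × (Fin n → 𝒵) => (fa (f s.1).1 i, s.1 i)) (Xv ω, Yv ω, Zv ω)) := by
        funext ω
        simp only [hA ω]
      rw [hfun, prob_factored μ Xv Yv Zv hXm hYm hZm f fa Q hchan
          (fun xs : Fin n → 𝒳 => fa (f xs).1 i = a ∧ xs i = x)
          (fun (j : Fin n) (y' : 𝒴) (z' : 𝒵) => True)
          (fun s : (Fin n → 𝒳) × (Fin n → 𝒴) × (Fin n → 𝒵) => (fa (f s.1).1 i, s.1 i)) (a, x)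
          (by
            intro xs ys zs
            simp only [Prod.mk.injEq, funext_iff]
            constructor
            · exact fun h => ⟨h, fun j => trivial⟩
            · exact fun h => h.1)]
      rw [Finset.mul_sum]
      refine Finset.sum_congr rfl fun xs _ => ?_
      beta_reduce
      by_cases hD : fa (f xs).1 i = a ∧ xs i = x
      · rw [if_pos hD, if_pos hD]
        have hx : xs i = x := hD.2
        have ha : fa (f xs).1 i = a := hD.1
        have hex : (∏ j : Fin n, (∑ y' : 𝒴, ∑ z' : 𝒵, if True then Q (xs j) (fa (f xs).1 j) (y', z') else 0))
            = (∑ y' : 𝒴, ∑ z' : 𝒵, Q x a (y', z')) * ∏ j ∈ Finset.univ.erase i, (∑ y' : 𝒴, ∑ z' : 𝒵, if True then Q (xs j) (fa (f xs).1 j) (y', z') else 0) := by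
          refine extract_factor i (fun (j : Fin n) (p : 𝒴 × 𝒵) => Q (xs j) (fa (f xs).1 j) p)
            _ _ _ ?_ ?_
          · simp only [hx, ha]
            exact Finset.sum_congr rfl fun y' _ => Finset.sum_congr rfl fun z' _ => if_pos trivial
          · exact fun j hj y' z' => Iff.rfl
        rw [hex]
        ring
      · rw [if_neg hD, if_neg hD, mul_zero]
    rw [hP1, hP2, hP3, hP4]
    by_cases hwf : ysuf i = none ∧ zpre i = none
    · rw [if_pos hwf, if_pos hwf]
      ring
    · rw [if_neg hwf, if_neg hwf]
      ring
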